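/- Let K be a field and let A be a connected graded K-algebra generated in degree 1 such that A_n = 0 for all n ≥ 3, dim_K A_1 is finite and at least 2, dim_K A_2 = 1, and the multiplication pairing A_1 × A_1 → A_2 is nondegenerate (for every nonzero x ∈ A_1 there exist y, y' ∈ A_1 with x·y ≠ 0 and y'·x ≠ 0; this is the case for the mod-p cohomology algebra of an infinite Demushkin pro-p group). Then for every left ideal I of A generated in degree 1 with I ≠ A_+ and every x ∈ A_1 \ I, the colon ideal I : x is generated in degree 1. In particular A is universally Koszul. -/
import Mathlib


/-- The colon ideal `I : x = {a | a * x ∈ I}` of a left ideal `I` by an element `x`. -/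
def colonIdeal {A : Type*} [Ring A] (I : Ideal A) (x : A) : Ideal A :=
  Submodule.comap (LinearMap.toSpanSingleton A A x) I

/-- A left ideal is generated in degree 1, i.e. generated by a subset of the
degree-one component `D`. -/
def GenInDeg1 {A : Type*} [Ring A] (D : Set A) (I : Ideal A) : Prop :=
  ∃ S ⊆ D, I = Ideal.span S

/-- The augmentation ideal `A_+ = ⊕_{n ≥ 1} A_n` of a connected graded algebra. -/
def augIdeal {K A : Type*} [Field K] [Ring A] [Algebra K A]
    (𝒜 : ℕ → Submodule K A) : Ideal A :=
  Ideal.span (⋃ n : ℕ, ((𝒜 (n + 1) : Submodule K A) : Set A))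

/-- Let `A` be a connected graded `K`-algebra generated in degree 1 with
`A_n = 0` for `n ≥ 3`, `2 ≤ dim_K A_1 < ∞`, `dim_K A_2 = 1`, and nondegenerate
multiplication pairing `A_1 × A_1 → A_2` (as for the mod-p cohomology of an infinite
Demushkin pro-p group).  Then for every left ideal `I` generated in degree 1 with
`I ≠ A_+` and every `x ∈ A_1 \ I`, the colon ideal `I : x` is generated in degree 1.
In particular `A` is universally Koszul. -/
theorem stmt2 {K A : Type*} [Field K] [Ring A] [Algebra K A]
    (𝒜 : ℕ → Submodule K A) [GradedAlgebra 𝒜]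
    (hconn : 𝒜 0 = 1)
    (hgen : Algebra.adjoin K ((𝒜 1 : Submodule K A) : Set A) = ⊤)
    (htop : ∀ n, 3 ≤ n → 𝒜 n = ⊥)
    (hfin : Module.Finite K (𝒜 1))
    (hdim1 : 2 ≤ Module.finrank K (𝒜 1))
    (hdim2 : Module.finrank K (𝒜 2) = 1)
    (hnd : ∀ z ∈ 𝒜 1, z ≠ 0 →
      (∃ y ∈ 𝒜 1, z * y ≠ 0) ∧ (∃ y' ∈ 𝒜 1, y' * z ≠ 0))
    (I : Ideal A) (hI : GenInDeg1 ((𝒜 1 : Submodule K A) : Set A) I)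
    (hIne : I ≠ augIdeal 𝒜)
    (x : A) (hx : x ∈ 𝒜 1) (hxI : x ∉ I) :
    GenInDeg1 ((𝒜 1 : Submodule K A) : Set A) (colonIdeal I x) := by
  classical
  obtain ⟨S, hSsub, rfl⟩ := hI
  -- `I = Ideal.span S` is a homogeneous ideal
  have hhom : (Ideal.span S).IsHomogeneous 𝒜 :=
    Ideal.homogeneous_span 𝒜 S fun y hy => ⟨1, hSsub hy⟩
  -- membership criterion for the colon ideal
  have hmemc : ∀ a : A, a ∈ colonIdeal (Ideal.span S) x ↔ a * x ∈ Ideal.span S := by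
    intro a
    simp [colonIdeal, Submodule.mem_comap, LinearMap.toSpanSingleton_apply, smul_eq_mul]
  -- the candidate degree-one generating set
  set U : Submodule K A :=
    𝒜 1 ⊓ (colonIdeal (Ideal.span S) x).restrictScalars K with hUdef
  have hUsub : (U : Set A) ⊆ ((𝒜 1 : Submodule K A) : Set A) := fun a ha =>
    (Submodule.mem_inf.mp ha).1
  -- the multiplication-by-`x` map `𝒜 1 → 𝒜 2`
  haveI := hfin
  haveI : Module.Finite K (𝒜 2) := Module.finite_of_finrank_eq_succ hdim2
  let φ : 𝒜 1 →ₗ[K] 𝒜 2 :=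
    { toFun := fun a => ⟨(a : A) * x, SetLike.mul_mem_graded a.2 hx⟩
      map_add' := by intro a b; ext; simp [add_mul]
      map_smul' := by intro c a; ext; simp [smul_mul_assoc] }
  -- its kernel is nonzero, giving a nonzero `u ∈ 𝒜 1` with `u * x = 0`
  have hker : ∃ u : 𝒜 1, u ≠ 0 ∧ (u : A) * x = 0 := by
    by_contra h
    push_neg at h
    have hinj : Function.Injective φ := by
      rw [← LinearMap.ker_eq_bot, LinearMap.ker_eq_bot']
      intro u hu
      by_contra hune
      exact h u hune (by simpa [φ, Subtype.ext_iff] using hu)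
    have := LinearMap.finrank_le_finrank_of_injective hinj
    omega
  obtain ⟨u, hu0, hux⟩ := hker
  have huU : (u : A) ∈ U :=
    Submodule.mem_inf.mpr ⟨u.2, (hmemc _).mpr (by rw [hux]; exact zero_mem _)⟩
  -- nondegeneracy gives `y` with `y * u ≠ 0`, which spans `𝒜 2`
  obtain ⟨-, y, hy1, hyu⟩ := hnd u u.2 (fun h => hu0 (Subtype.ext h))
  have hw2 : y * (u : A) ∈ 𝒜 2 := SetLike.mul_mem_graded hy1 u.2
  have hspan := (finrank_eq_one_iff_of_nonzero' (⟨y * (u : A), hw2⟩ : 𝒜 2)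
    (by simpa [Subtype.ext_iff] using hyu)).mp hdim2
  have hyuU : y * (u : A) ∈ Ideal.span (U : Set A) :=
    Ideal.mul_mem_left _ y (Ideal.subset_span huU)
  have h2 : ∀ z ∈ 𝒜 2, z ∈ Ideal.span (U : Set A) := by
    intro z hz
    obtain ⟨c, hc⟩ := hspan ⟨z, hz⟩
    have hcz : c • (y * (u : A)) = z := congrArg Subtype.val hc
    rw [← hcz, Algebra.smul_def]
    exact Ideal.mul_mem_left _ _ hyuU
  refine ⟨(U : Set A), hUsub, le_antisymm ?_ ?_⟩
  · -- the colon ideal is contained in the span of `U`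
    intro a ha
    have hax : a * x ∈ Ideal.span S := (hmemc a).mp ha
    set f : ℕ → A := fun n => (DirectSum.decompose 𝒜 a n : A) with hfdef
    have hcomp : ∀ n : ℕ, ((DirectSum.decompose 𝒜 (a * x)) (n + 1) : A) = f n * x := by
      intro n
      rw [DirectSum.decompose_mul, DirectSum.decompose_of_mem 𝒜 hx,
        DirectSum.coe_mul_of_apply_add]
    have hcomp1 : ((DirectSum.decompose 𝒜 (a * x)) 1 : A) = f 0 * x := hcomp 0
    have hcomp2 : ((DirectSum.decompose 𝒜 (a * x)) 2 : A) = f 1 * x := hcomp 1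
    -- the degree-0 component of `a` vanishes
    have hf0 : f 0 = 0 := by
      have h0mem : f 0 ∈ 𝒜 0 := SetLike.coe_mem _
      rw [hconn] at h0mem
      obtain ⟨c, hc⟩ := Submodule.mem_one.mp h0mem
      have hf0x : f 0 * x ∈ Ideal.span S := by
        have := hhom 1 hax; rwa [hcomp1] at this
      by_cases hc0 : c = 0
      · rw [← hc, hc0, map_zero]
      · exfalso
        rw [← hc] at hf0x
        have h2' := Ideal.mul_mem_left _ (algebraMap K A c⁻¹) hf0x
        rw [← mul_assoc, ← map_mul, inv_mul_cancel₀ hc0, map_one, one_mul] at h2'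
        exact hxI h2'
    have hf1 : f 1 ∈ U := by
      refine Submodule.mem_inf.mpr ⟨SetLike.coe_mem _, (hmemc _).mpr ?_⟩
      have := hhom 2 hax; rwa [hcomp2] at this
    have hall : ∀ n, f n ∈ Ideal.span (U : Set A) := by
      intro n
      match n with
      | 0 => rw [hf0]; exact zero_mem _
      | 1 => exact Ideal.subset_span hf1
      | 2 => exact h2 _ (SetLike.coe_mem _)
      | (n + 3) =>
        have hb : f (n + 3) ∈ (⊥ : Submodule K A) := by
          rw [← htop (n + 3) (by omega)]; exact SetLike.coe_mem _
        rw [(Submodule.mem_bot K).mp hb]; exact zero_mem _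
    have hsum := DirectSum.sum_support_decompose 𝒜 a
    exact hsum ▸ Submodule.sum_mem _ fun i _ => hall i
  · -- the span of `U` is contained in the colon ideal
    rw [Ideal.span_le]
    intro a haU
    exact (Submodule.mem_inf.mp haU).2
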